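/- Let Π be a finite root system in the dual of a finite-dimensional real inner product space 𝔞, with simple system Σ, positive system Π⁺, open fundamental Weyl chamber 𝔞⁺ = {H ∈ 𝔞 : α(H) > 0 for all α ∈ Σ}, and Weyl group W. For Θ ⊆ Σ let ⟨Θ⟩ = Π ∩ span_ℝ(Θ) and let W_Θ ⊆ W be the subgroup generated by the reflections s_α with α ∈ Θ. Then {H ∈ 𝔞 : α(H) > 0 for all α ∈ Π⁺ \ ⟨Θ⟩} is exactly the topological interior of W_Θ · cl(𝔞⁺), and it is an open convex cone in 𝔞. -/

import Mathlib

open Filter Topology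

section

variable {𝔞 : Type*} [NormedAddCommGroup 𝔞] [InnerProductSpace ℝ 𝔞] [FiniteDimensional ℝ 𝔞]

/-- The vector `u ∈ 𝔞` representing the functional `α` via the inner product:
`α x = ⟪u, x⟫` for all `x`. -/
noncomputable def rieszVec (α : 𝔞 →ₗ[ℝ] ℝ) : 𝔞 :=
  (InnerProductSpace.toDual ℝ 𝔞).symm (LinearMap.toContinuousLinearMap α)

/-- The orthogonal reflection of `𝔞` in the hyperplane `ker α`:
`x ↦ x - (2 α x / α u) • u`, where `u` is the Riesz vector of `α`. -/
noncomputable def rootRefl (α : 𝔞 →ₗ[ℝ] ℝ) : Module.End ℝ 𝔞 :=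
  LinearMap.id - (2 / α (rieszVec α)) • (α.smulRight (rieszVec α))

/-- `RS` bundles the data of a finite (possibly non-reduced) root system
`rts ⊆ 𝔞* \ {0}`, stable under the (duals of the) root reflections, together
with a positive system `pos` coming from a simple system `sim`. -/
structure IsRootSystemWithBase (rts pos : Set (𝔞 →ₗ[ℝ] ℝ)) (sim : Finset (𝔞 →ₗ[ℝ] ℝ)) : Prop where
  finite : rts.Finite
  ne_zero : (0 : 𝔞 →ₗ[ℝ] ℝ) ∉ rts
  refl_mem : ∀ α ∈ rts, ∀ β ∈ rts, β ∘ₗ (rootRefl α : 𝔞 →ₗ[ℝ] 𝔞) ∈ rts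
  sim_subset : ↑sim ⊆ pos
  pos_subset : pos ⊆ rts
  union : rts = pos ∪ (fun β => -β) '' pos
  disjoint : Disjoint pos ((fun β => -β) '' pos)
  pos_comb : ∀ β ∈ pos, ∃ c : (𝔞 →ₗ[ℝ] ℝ) → ℝ,
    (∀ α ∈ sim, 0 ≤ c α) ∧ β = ∑ α ∈ sim, c α • α
  indep : LinearIndependent ℝ (fun α : sim => (α : 𝔞 →ₗ[ℝ] ℝ))

/-- The open fundamental Weyl chamber determined by the simple system `sim`. -/
def weylChamber (sim : Finset (𝔞 →ₗ[ℝ] ℝ)) : Set 𝔞 :=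
  {H : 𝔞 | ∀ α ∈ sim, 0 < α H}

/-- `⟨Θ⟩ = Π ∩ span ℝ Θ`, the roots lying in the span of `Θ`. -/
def rootsSpannedBy (rts : Set (𝔞 →ₗ[ℝ] ℝ)) (Θ : Finset (𝔞 →ₗ[ℝ] ℝ)) : Set (𝔞 →ₗ[ℝ] ℝ) :=
  rts ∩ (Submodule.span ℝ (↑Θ : Set (𝔞 →ₗ[ℝ] ℝ)) : Set (𝔞 →ₗ[ℝ] ℝ))

/-- The subgroup `W_Θ` of the Weyl group generated by the reflections `s_α`,
`α ∈ Θ` (as a submonoid of `End 𝔞`; since the reflections are involutions this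
has the same elements as the generated group). -/
noncomputable def weylSubmonoid (Θ : Set (𝔞 →ₗ[ℝ] ℝ)) : Submonoid (Module.End ℝ 𝔞) :=
  Submonoid.closure (rootRefl '' Θ)



-- AUX LEMMAS


lemma inner_rieszVec (α : 𝔞 →ₗ[ℝ] ℝ) (x : 𝔞) : (inner ℝ (rieszVec α) x : ℝ) = α x := by
  simp [rieszVec, InnerProductSpace.toDual_symm_apply]

lemma apply_rieszVec_self (α : 𝔞 →ₗ[ℝ] ℝ) : α (rieszVec α) = ‖rieszVec α‖ ^ 2 := by
  rw [← inner_rieszVec, real_inner_self_eq_norm_sq]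

lemma rieszVec_eq_zero_iff {α : 𝔞 →ₗ[ℝ] ℝ} : rieszVec α = 0 ↔ α = 0 := by
  constructor
  · intro h
    ext x
    rw [← inner_rieszVec, h, inner_zero_left]; rfl
  · intro h; subst h
    have := inner_rieszVec (0 : 𝔞 →ₗ[ℝ] ℝ) (rieszVec (0 : 𝔞 →ₗ[ℝ] ℝ))
    simp at this
    simpa [real_inner_self_eq_norm_sq, pow_eq_zero_iff] using this

lemma apply_rieszVec_self_pos {α : 𝔞 →ₗ[ℝ] ℝ} (hα : α ≠ 0) : 0 < α (rieszVec α) := by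
  rw [apply_rieszVec_self]
  have h : rieszVec α ≠ 0 := fun h => hα (rieszVec_eq_zero_iff.mp h)
  have := norm_pos_iff.mpr h
  positivity

lemma rootRefl_apply (α : 𝔞 →ₗ[ℝ] ℝ) (x : 𝔞) :
    rootRefl α x = x - (2 * α x / α (rieszVec α)) • rieszVec α := by
  simp [rootRefl, LinearMap.smulRight_apply, smul_smul]
  ring_nf

lemma apply_rootRefl (α β : 𝔞 →ₗ[ℝ] ℝ) (x : 𝔞) :
    β (rootRefl α x) = β x - (2 * α x / α (rieszVec α)) * β (rieszVec α) := by
  rw [rootRefl_apply]; simp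

lemma self_rootRefl {α : 𝔞 →ₗ[ℝ] ℝ} (hα : α ≠ 0) (x : 𝔞) :
    α (rootRefl α x) = - α x := by
  rw [apply_rootRefl]
  have h := (apply_rieszVec_self_pos hα).ne'
  field_simp
  ring

lemma rootRefl_rootRefl {α : 𝔞 →ₗ[ℝ] ℝ} (hα : α ≠ 0) (x : 𝔞) :
    rootRefl α (rootRefl α x) = x := by
  rw [rootRefl_apply α (rootRefl α x), self_rootRefl hα, rootRefl_apply]
  rw [show (2 * -α x / α (rieszVec α)) = -(2 * α x / α (rieszVec α)) by ring, neg_smul]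
  abel

lemma comp_rootRefl (α β : 𝔞 →ₗ[ℝ] ℝ) :
    β ∘ₗ (rootRefl α : 𝔞 →ₗ[ℝ] 𝔞) = β - (2 * β (rieszVec α) / α (rieszVec α)) • α := by
  ext x
  simp [apply_rootRefl]
  ring



lemma comp_rootRefl_comp_rootRefl {α : 𝔞 →ₗ[ℝ] ℝ} (hα : α ≠ 0) (β : 𝔞 →ₗ[ℝ] ℝ) :
    (β ∘ₗ (rootRefl α : 𝔞 →ₗ[ℝ] 𝔞)) ∘ₗ (rootRefl α : 𝔞 →ₗ[ℝ] 𝔞) = β := by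
  ext x; simp [LinearMap.comp_apply, rootRefl_rootRefl hα]

lemma comp_rootRefl_self {α : 𝔞 →ₗ[ℝ] ℝ} (hα : α ≠ 0) :
    α ∘ₗ (rootRefl α : 𝔞 →ₗ[ℝ] 𝔞) = (-1 : ℝ) • α := by
  ext x; simp [LinearMap.comp_apply, self_rootRefl hα]

open scoped Classical

section RS
variable {rts pos : Set (𝔞 →ₗ[ℝ] ℝ)} {sim : Finset (𝔞 →ₗ[ℝ] ℝ)}
  (hRS : IsRootSystemWithBase rts pos sim)

include hRS

lemma sim_ne_zero {α : 𝔞 →ₗ[ℝ] ℝ} (h : α ∈ sim) : α ≠ 0 := by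
  intro h0
  have := hRS.pos_subset (hRS.sim_subset h)
  rw [h0] at this
  exact hRS.ne_zero this

lemma coeff_unique {c d : (𝔞 →ₗ[ℝ] ℝ) → ℝ}
    (h : ∑ α ∈ sim, c α • α = ∑ α ∈ sim, d α • α) : ∀ α ∈ sim, c α = d α := by
  intro α hα
  have hsum : ∑ i : sim, (c i - d i) • (i : 𝔞 →ₗ[ℝ] ℝ) = 0 := by
    rw [Finset.sum_coe_sort sim (fun α => (c α - d α) • α)]
    rw [Finset.sum_congr rfl fun i _ => sub_smul (c i) (d i) i, Finset.sum_sub_distrib, h, sub_self]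
  have := Fintype.linearIndependent_iff.mp hRS.indep (fun i => c i - d i) hsum ⟨α, hα⟩
  linarith [this]

lemma mem_pos_or_neg {γ : 𝔞 →ₗ[ℝ] ℝ} (h : γ ∈ rts) : γ ∈ pos ∨ -γ ∈ pos := by
  rw [hRS.union] at h
  rcases h with h | ⟨δ, hδ, rfl⟩
  · exact Or.inl h
  · exact Or.inr (by simpa using hδ)

lemma smul_simple_mem_pos {α : 𝔞 →ₗ[ℝ] ℝ} {c : ℝ} (hα : α ∈ sim)
    (h : (c • α : 𝔞 →ₗ[ℝ] ℝ) ∈ pos) : 0 < c := by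
  obtain ⟨c', hc'0, hc'⟩ := hRS.pos_comb _ h
  have heq : ∑ σ ∈ sim, (fun σ => if σ = α then c else 0) σ • σ = ∑ σ ∈ sim, c' σ • σ := by
    rw [← hc']
    simp only [ite_smul, zero_smul]
    rw [Finset.sum_ite_eq' sim α (fun σ => c • σ)]
    simp [hα]
  have huniq := coeff_unique hRS heq
  have hcα : c = c' α := by simpa using huniq α hα
  rcases lt_or_eq_of_le (hcα ▸ hc'0 α hα) with h' | h'
  · exact h'
  · exfalso
    apply hRS.ne_zero
    have : (c • α : 𝔞 →ₗ[ℝ] ℝ) = 0 := by rw [← h', zero_smul]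
    exact this ▸ hRS.pos_subset h

lemma comp_rootRefl_mem_pos {α β : 𝔞 →ₗ[ℝ] ℝ} (hα : α ∈ sim) (hβ : β ∈ pos)
    (hmul : ∀ c : ℝ, β ≠ c • α) : β ∘ₗ (rootRefl α : 𝔞 →ₗ[ℝ] 𝔞) ∈ pos := by
  set k : ℝ := 2 * β (rieszVec α) / α (rieszVec α) with hk
  have hγrts : β ∘ₗ (rootRefl α : 𝔞 →ₗ[ℝ] 𝔞) ∈ rts :=
    hRS.refl_mem α (hRS.pos_subset (hRS.sim_subset hα)) β (hRS.pos_subset hβ)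
  rcases mem_pos_or_neg hRS hγrts with h | h
  · exact h
  · exfalso
    set δ : 𝔞 →ₗ[ℝ] ℝ := -(β ∘ₗ (rootRefl α : 𝔞 →ₗ[ℝ] 𝔞)) with hδ
    have hβδ : β + δ = k • α := by
      rw [hδ, comp_rootRefl]
      abel
    obtain ⟨c, hc0, hcsum⟩ := hRS.pos_comb β hβ
    obtain ⟨d, hd0, hdsum⟩ := hRS.pos_comb δ h
    have heq : ∑ σ ∈ sim, (c σ + d σ) • σ = ∑ σ ∈ sim, (fun σ => if σ = α then k else 0) σ • σ := by
      have h2 : ∑ σ ∈ sim, (fun σ => if σ = α then k else 0) σ • σ = k • α := by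
        simp only [ite_smul, zero_smul]
        rw [Finset.sum_ite_eq' sim α (fun σ => k • σ)]
        simp [hα]
      rw [h2, ← hβδ, hcsum, hdsum]
      simp [add_smul, Finset.sum_add_distrib]
    have huniq := coeff_unique hRS heq
    apply hmul (c α)
    rw [hcsum]
    apply Finset.sum_eq_single_of_mem α hα
    intro σ hσ hσα
    have h0 : c σ + d σ = 0 := by simpa [hσα] using huniq σ hσ
    have : c σ = 0 := le_antisymm (by linarith [hd0 σ hσ]) (hc0 σ hσ)
    rw [this, zero_smul]

lemma sim_inter_span {Θ : Finset (𝔞 →ₗ[ℝ] ℝ)} (hΘ : Θ ⊆ sim) {α : 𝔞 →ₗ[ℝ] ℝ}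
    (hα : α ∈ sim) (hsp : α ∈ (Submodule.span ℝ (↑Θ : Set (𝔞 →ₗ[ℝ] ℝ)))) : α ∈ Θ := by
  by_contra hαΘ
  obtain ⟨f, -, hf⟩ := Submodule.mem_span_finset.mp hsp
  have hexp : ∑ σ ∈ sim, (fun σ => if σ ∈ Θ then f σ else 0) σ • σ = α := by
    rw [← hf]
    rw [← Finset.sum_subset hΘ]
    · apply Finset.sum_congr rfl
      intro σ hσ
      simp [hσ]
    · intro σ _ hσ
      simp [hσ]
  have hexp2 : ∑ σ ∈ sim, (fun σ => if σ = α then (1:ℝ) else 0) σ • σ = α := by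
    simp only [ite_smul, zero_smul]
    rw [Finset.sum_ite_eq' sim α (fun σ => (1:ℝ) • σ)]
    simp [hα]
  have := coeff_unique hRS (hexp.trans hexp2.symm) α hα
  simp [hαΘ] at this

lemma comp_rootRefl_out {Θ : Finset (𝔞 →ₗ[ℝ] ℝ)} (hΘ : Θ ⊆ sim) {α β : 𝔞 →ₗ[ℝ] ℝ}
    (hα : α ∈ Θ) (hβ : β ∈ pos) (hβs : β ∉ (Submodule.span ℝ (↑Θ : Set (𝔞 →ₗ[ℝ] ℝ)))) :
    β ∘ₗ (rootRefl α : 𝔞 →ₗ[ℝ] 𝔞) ∈ pos ∧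
      β ∘ₗ (rootRefl α : 𝔞 →ₗ[ℝ] 𝔞) ∉ (Submodule.span ℝ (↑Θ : Set (𝔞 →ₗ[ℝ] ℝ))) := by
  have hαs : α ∈ Submodule.span ℝ (↑Θ : Set (𝔞 →ₗ[ℝ] ℝ)) :=
    Submodule.subset_span (by exact_mod_cast hα)
  have hmul : ∀ c : ℝ, β ≠ c • α := by
    intro c hc; exact hβs (hc ▸ Submodule.smul_mem _ c hαs)
  refine ⟨comp_rootRefl_mem_pos hRS (hΘ hα) hβ hmul, ?_⟩
  intro hmem
  apply hβs
  have hβeq : β = (β ∘ₗ (rootRefl α : 𝔞 →ₗ[ℝ] 𝔞)) + (2 * β (rieszVec α) / α (rieszVec α)) • α := by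
    rw [comp_rootRefl]; abel
  rw [hβeq]
  exact Submodule.add_mem _ hmem (Submodule.smul_mem _ _ hαs)

lemma comp_weyl_out {Θ : Finset (𝔞 →ₗ[ℝ] ℝ)} (hΘ : Θ ⊆ sim) {w : Module.End ℝ 𝔞}
    (hw : w ∈ weylSubmonoid (↑Θ : Set (𝔞 →ₗ[ℝ] ℝ))) :
    ∀ β ∈ pos, β ∉ (Submodule.span ℝ (↑Θ : Set (𝔞 →ₗ[ℝ] ℝ))) →
      β ∘ₗ (w : 𝔞 →ₗ[ℝ] 𝔞) ∈ pos ∧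
        β ∘ₗ (w : 𝔞 →ₗ[ℝ] 𝔞) ∉ (Submodule.span ℝ (↑Θ : Set (𝔞 →ₗ[ℝ] ℝ))) := by
  induction hw using Submonoid.closure_induction with
  | mem x hx =>
    obtain ⟨α, hα, rfl⟩ := hx
    intro β hβ hβs
    exact comp_rootRefl_out hRS hΘ (by exact_mod_cast hα) hβ hβs
  | one =>
    intro β hβ hβs
    have : β ∘ₗ ((1 : Module.End ℝ 𝔞) : 𝔞 →ₗ[ℝ] 𝔞) = β := rfl
    rw [this]; exact ⟨hβ, hβs⟩
  | mul x y _ _ ihx ihy =>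
    intro β hβ hβs
    have h1 := ihx β hβ hβs
    have h2 := ihy _ h1.1 h1.2
    have hcomp : β ∘ₗ ((x * y : Module.End ℝ 𝔞) : 𝔞 →ₗ[ℝ] 𝔞)
        = (β ∘ₗ (x : 𝔞 →ₗ[ℝ] 𝔞)) ∘ₗ (y : 𝔞 →ₗ[ℝ] 𝔞) := rfl
    rw [hcomp]; exact h2

lemma descent {Θ : Finset (𝔞 →ₗ[ℝ] ℝ)} (hΘ : Θ ⊆ sim) (x : 𝔞) :
    ∃ w ∈ weylSubmonoid (↑Θ : Set (𝔞 →ₗ[ℝ] ℝ)), (∀ α ∈ Θ, 0 ≤ α (w x)) ∧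
      ∃ w' ∈ weylSubmonoid (↑Θ : Set (𝔞 →ₗ[ℝ] ℝ)), w' (w x) = x := by
  classical
  set posΘ : Finset (𝔞 →ₗ[ℝ] ℝ) :=
    (hRS.finite.subset hRS.pos_subset).toFinset.filter
      (fun β => β ∈ Submodule.span ℝ (↑Θ : Set (𝔞 →ₗ[ℝ] ℝ))) with hposΘ
  have hΘsub : ∀ α ∈ Θ, α ∈ posΘ := by
    intro α hα
    rw [hposΘ, Finset.mem_filter, Set.Finite.mem_toFinset]
    exact ⟨hRS.sim_subset (hΘ hα), Submodule.subset_span (by exact_mod_cast hα)⟩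
  suffices h : ∀ n (x : 𝔞), (posΘ.filter (fun β => β x < 0)).card ≤ n →
      ∃ w ∈ weylSubmonoid (↑Θ : Set (𝔞 →ₗ[ℝ] ℝ)), (∀ α ∈ Θ, 0 ≤ α (w x)) ∧
      ∃ w' ∈ weylSubmonoid (↑Θ : Set (𝔞 →ₗ[ℝ] ℝ)), w' (w x) = x by
    exact h _ x le_rfl
  intro n
  induction n with
  | zero =>
    intro x hcard
    refine ⟨1, one_mem _, ?_, 1, one_mem _, rfl⟩
    intro α hα
    by_contra hneg
    have : α ∈ posΘ.filter (fun β => β ((1 : Module.End ℝ 𝔞) x) < 0) := by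
      rw [Finset.mem_filter]
      exact ⟨hΘsub α hα, lt_of_not_ge hneg⟩
    have hx1 : (1 : Module.End ℝ 𝔞) x = x := rfl
    rw [hx1] at this
    have := Finset.card_pos.mpr ⟨α, this⟩
    omega
  | succ n ih =>
    intro x hcard
    by_cases hx : ∀ α ∈ Θ, 0 ≤ α x
    · exact ⟨1, one_mem _, fun α hα => hx α hα, 1, one_mem _, rfl⟩
    · push_neg at hx
      obtain ⟨α, hαΘ, hαx⟩ := hx
      have hα0 : α ≠ 0 := sim_ne_zero hRS (hΘ hαΘ)
      set y := rootRefl α x with hy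
      have hαy : α y = - α x := self_rootRefl hα0 x
      have hkey : (posΘ.filter (fun β => β y < 0)).card <
          (posΘ.filter (fun β => β x < 0)).card := by
        have hmemα : α ∈ posΘ.filter (fun β => β x < 0) :=
          Finset.mem_filter.mpr ⟨hΘsub α hαΘ, hαx⟩
        have hmaps : ∀ β ∈ posΘ.filter (fun β => β y < 0),
            β ∘ₗ (rootRefl α : 𝔞 →ₗ[ℝ] 𝔞) ∈ (posΘ.filter (fun β => β x < 0)).erase α := by
          intro β hβ
          rw [Finset.mem_filter] at hβ
          obtain ⟨hβΘ, hβy⟩ := hβ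
          rw [hposΘ, Finset.mem_filter, Set.Finite.mem_toFinset] at hβΘ
          obtain ⟨hβpos, hβspan⟩ := hβΘ
          have hmul : ∀ c : ℝ, β ≠ c • α := by
            intro c hc
            have hcpos : 0 < c := smul_simple_mem_pos hRS (hΘ hαΘ) (hc ▸ hβpos)
            have hβy' : β y = c * α y := by rw [hc]; simp
            have : (0:ℝ) < c * α y := mul_pos hcpos (by rw [hαy]; linarith)
            linarith [hβy'.symm ▸ hβy]
          have hpos' : β ∘ₗ (rootRefl α : 𝔞 →ₗ[ℝ] 𝔞) ∈ pos :=
            comp_rootRefl_mem_pos hRS (hΘ hαΘ) hβpos hmul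
          have hspan' : β ∘ₗ (rootRefl α : 𝔞 →ₗ[ℝ] 𝔞) ∈
              Submodule.span ℝ (↑Θ : Set (𝔞 →ₗ[ℝ] ℝ)) := by
            rw [comp_rootRefl]
            exact Submodule.sub_mem _ hβspan
              (Submodule.smul_mem _ _ (Submodule.subset_span (by exact_mod_cast hαΘ)))
          refine Finset.mem_erase.mpr ⟨?_, Finset.mem_filter.mpr ⟨?_, ?_⟩⟩
          · intro heq
            have hβα : β = (-1 : ℝ) • α := by
              have h2 := congrArg (fun g => g ∘ₗ (rootRefl α : 𝔞 →ₗ[ℝ] 𝔞)) heq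
              rwa [comp_rootRefl_comp_rootRefl hα0, comp_rootRefl_self hα0] at h2
            have := smul_simple_mem_pos hRS (hΘ hαΘ) (hβα ▸ hβpos)
            linarith
          · rw [hposΘ, Finset.mem_filter, Set.Finite.mem_toFinset]
            exact ⟨hpos', hspan'⟩
          · simpa using hβy
        have hinj : Set.InjOn (fun β : 𝔞 →ₗ[ℝ] ℝ => β ∘ₗ (rootRefl α : 𝔞 →ₗ[ℝ] 𝔞))
            ↑(posΘ.filter (fun β => β y < 0)) := by
          intro a _ b _ hab
          have h2 := congrArg (fun g => g ∘ₗ (rootRefl α : 𝔞 →ₗ[ℝ] 𝔞)) hab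
          rwa [comp_rootRefl_comp_rootRefl hα0, comp_rootRefl_comp_rootRefl hα0] at h2
        calc (posΘ.filter (fun β => β y < 0)).card
            ≤ ((posΘ.filter (fun β => β x < 0)).erase α).card :=
              Finset.card_le_card_of_injOn _ hmaps hinj
          _ < (posΘ.filter (fun β => β x < 0)).card :=
              Finset.card_erase_lt_of_mem hmemα
      obtain ⟨w, hw, hwpos, w', hw', hw'eq⟩ := ih y (by omega)
      have hsmem : rootRefl α ∈ weylSubmonoid (↑Θ : Set (𝔞 →ₗ[ℝ] ℝ)) :=
        Submonoid.subset_closure (Set.mem_image_of_mem _ (by exact_mod_cast hαΘ))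
      refine ⟨w * rootRefl α, mul_mem hw hsmem, ?_, rootRefl α * w',
        mul_mem hsmem hw', ?_⟩
      · intro σ hσ
        have heq : (w * rootRefl α) x = w y := rfl
        rw [heq]
        exact hwpos σ hσ
      · have heq : (w * rootRefl α) x = w y := rfl
        have heq2 : (rootRefl α * w') (w y) = rootRefl α (w' (w y)) := rfl
        rw [heq, heq2, hw'eq, hy, rootRefl_rootRefl hα0]

end RS

section Chamber
variable {rts pos : Set (𝔞 →ₗ[ℝ] ℝ)} {sim : Finset (𝔞 →ₗ[ℝ] ℝ)}

lemma weylChamber_nonempty (hRS : IsRootSystemWithBase rts pos sim) :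
    (weylChamber sim).Nonempty := by
  classical
  set T : 𝔞 →ₗ[ℝ] (sim → ℝ) := LinearMap.pi (fun σ : sim => (σ : 𝔞 →ₗ[ℝ] ℝ)) with hT
  have hsurj : Function.Surjective T := by
    by_contra hns
    rw [← LinearMap.range_eq_top, ← Ne, ← lt_top_iff_ne_top] at hns
    obtain ⟨φ, φ0, hker⟩ := Submodule.exists_le_ker_of_lt_top _ hns
    have hφ : ∀ H : 𝔞, φ (T H) = 0 := fun H => hker ⟨H, rfl⟩
    have hsum : ∑ i : sim, φ (fun j => if i = j then (1:ℝ) else 0) • ((i : sim) : 𝔞 →ₗ[ℝ] ℝ)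
        = 0 := by
      ext H
      have h1 := LinearMap.pi_apply_eq_sum_univ φ (T H)
      rw [hφ H] at h1
      simp only [LinearMap.sum_apply, LinearMap.smul_apply, LinearMap.zero_apply, smul_eq_mul]
      have h2 : ∀ i : sim, T H i = (i : 𝔞 →ₗ[ℝ] ℝ) H := fun i => rfl
      have h3 : ∑ i : sim, (φ fun j => if i = j then (1:ℝ) else 0) * (i : 𝔞 →ₗ[ℝ] ℝ) H
          = ∑ i : sim, T H i • φ (fun j => if i = j then (1:ℝ) else 0) :=
        Finset.sum_congr rfl fun i _ => by rw [h2 i, smul_eq_mul, mul_comm]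
      rw [h3, ← h1]
    have hzero := Fintype.linearIndependent_iff.mp hRS.indep
      (fun i => φ (fun j => if i = j then (1:ℝ) else 0)) hsum
    apply φ0
    apply Module.Basis.ext (Pi.basisFun ℝ ↥sim)
    intro i
    have heq : (Pi.basisFun ℝ (↥sim)) i = (fun j => if i = j then (1:ℝ) else 0) := by
      funext j
      simp [Pi.basisFun_apply, Pi.single_apply, eq_comm]
    rw [heq]
    simpa using hzero i
  obtain ⟨H₀, hH₀⟩ := hsurj (fun _ => 1)
  refine ⟨H₀, ?_⟩
  intro α hα
  have : T H₀ ⟨α, hα⟩ = 1 := by rw [hH₀]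
  have h2 : T H₀ ⟨α, hα⟩ = α H₀ := rfl
  rw [h2] at this
  rw [this]
  norm_num

lemma closure_weylChamber (hRS : IsRootSystemWithBase rts pos sim) :
    closure (weylChamber sim) = {H : 𝔞 | ∀ α ∈ sim, 0 ≤ α H} := by
  obtain ⟨H₀, hH₀⟩ := weylChamber_nonempty hRS
  apply Set.Subset.antisymm
  · apply closure_minimal
    · intro H hH α hα
      exact (hH α hα).le
    · have heq : {H : 𝔞 | ∀ α ∈ sim, 0 ≤ α H} = ⋂ α ∈ (sim : Finset (𝔞 →ₗ[ℝ] ℝ)),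
          {H : 𝔞 | 0 ≤ α H} := by
        ext H; simp
      rw [heq]
      exact isClosed_biInter
        (fun α _ => isClosed_le continuous_const α.continuous_of_finiteDimensional)
  · intro H hH
    have htd : Tendsto (fun n : ℕ => H + (1/((n:ℝ)+1)) • H₀) atTop (nhds H) := by
      have h1 : Tendsto (fun n : ℕ => 1/((n:ℝ)+1)) atTop (nhds 0) :=
        tendsto_one_div_add_atTop_nhds_zero_nat
      have h2 := h1.smul_const H₀
      rw [zero_smul] at h2
      have h3 := tendsto_const_nhds (x := H) (f := atTop (α := ℕ)) |>.add h2
      simpa using h3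
    refine mem_closure_of_tendsto htd (Filter.Eventually.of_forall ?_)
    intro n α hα
    have h1 : (0:ℝ) < 1/((n:ℝ)+1) := by positivity
    have h2 := hH α hα
    have h3 := hH₀ α hα
    simp only [map_add, map_smul, smul_eq_mul]
    nlinarith

lemma pos_nonneg_on (hRS : IsRootSystemWithBase rts pos sim) {β : 𝔞 →ₗ[ℝ] ℝ} (hβ : β ∈ pos)
    {H : 𝔞} (hH : ∀ α ∈ sim, 0 ≤ α H) : 0 ≤ β H := by
  obtain ⟨c, hc0, hcsum⟩ := hRS.pos_comb β hβ
  rw [hcsum]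
  simp only [LinearMap.sum_apply, LinearMap.smul_apply, smul_eq_mul]
  exact Finset.sum_nonneg fun σ hσ => mul_nonneg (hc0 σ hσ) (hH σ hσ)

end Chamber


/-- The set where all positive roots outside `⟨Θ⟩` are positive is exactly the
interior of `W_Θ · cl(𝔞⁺)`, and it is an open convex cone. -/
theorem pos_cone_eq_interior_weylSubmonoid_image (rts pos : Set (𝔞 →ₗ[ℝ] ℝ))
    (sim Θ : Finset (𝔞 →ₗ[ℝ] ℝ))
    (hRS : IsRootSystemWithBase rts pos sim) (hΘ : Θ ⊆ sim) :
    {H : 𝔞 | ∀ α ∈ pos \ rootsSpannedBy rts Θ, 0 < α H}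
        = interior (⋃ w ∈ weylSubmonoid (↑Θ : Set (𝔞 →ₗ[ℝ] ℝ)),
            ⇑w '' closure (weylChamber sim)) ∧
      IsOpen {H : 𝔞 | ∀ α ∈ pos \ rootsSpannedBy rts Θ, 0 < α H} ∧
      Convex ℝ {H : 𝔞 | ∀ α ∈ pos \ rootsSpannedBy rts Θ, 0 < α H} ∧
      ∀ c : ℝ, 0 < c → ∀ H ∈ {H : 𝔞 | ∀ α ∈ pos \ rootsSpannedBy rts Θ, 0 < α H},
        c • H ∈ {H : 𝔞 | ∀ α ∈ pos \ rootsSpannedBy rts Θ, 0 < α H} := by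
  classical
  set S := {H : 𝔞 | ∀ α ∈ pos \ rootsSpannedBy rts Θ, 0 < α H} with hS
  have hmemS : ∀ H : 𝔞, H ∈ S ↔
      ∀ β ∈ pos, β ∉ Submodule.span ℝ (↑Θ : Set (𝔞 →ₗ[ℝ] ℝ)) → 0 < β H := by
    intro H
    constructor
    · intro h β hβ hβs
      exact h β ⟨hβ, fun hmem => hβs hmem.2⟩
    · intro h β hβ
      exact h β hβ.1 (fun hsp => hβ.2 ⟨hRS.pos_subset hβ.1, hsp⟩)
  have hfin : (pos \ rootsSpannedBy rts Θ).Finite :=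
    hRS.finite.subset (fun β hβ => hRS.pos_subset hβ.1)
  have hopen : IsOpen S := by
    have heq : S = ⋂ β ∈ pos \ rootsSpannedBy rts Θ, {H : 𝔞 | 0 < β H} := by
      ext H
      simp only [hS, Set.mem_setOf_eq, Set.mem_iInter]
    rw [heq]
    exact hfin.isOpen_biInter
      (fun β _ => isOpen_lt continuous_const β.continuous_of_finiteDimensional)
  have hconv : Convex ℝ S := by
    intro x hx y hy a b ha hb hab
    intro β hβ
    have h1 := hx β hβ
    have h2 := hy β hβ
    simp only [map_add, map_smul, smul_eq_mul]
    rcases ha.lt_or_eq with ha' | ha'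
    · nlinarith [mul_pos ha' h1, mul_nonneg hb h2.le]
    · have hb1 : b = 1 := by linarith
      rw [← ha', hb1]
      simpa using h2
  have hcone : ∀ c : ℝ, 0 < c → ∀ H ∈ S, c • H ∈ S := by
    intro c hc H hH β hβ
    have := hH β hβ
    simp only [map_smul, smul_eq_mul]
    exact mul_pos hc this
  have hDchamber : closure (weylChamber sim) = {H : 𝔞 | ∀ α ∈ sim, 0 ≤ α H} :=
    closure_weylChamber hRS
  set U := ⋃ w ∈ weylSubmonoid (↑Θ : Set (𝔞 →ₗ[ℝ] ℝ)), ⇑w '' closure (weylChamber sim) with hU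
  have hSsubU : S ⊆ U := by
    intro H hH
    obtain ⟨w, hw, hwpos, w', hw', hw'eq⟩ := descent hRS hΘ H
    have hwH : w H ∈ closure (weylChamber sim) := by
      rw [hDchamber]
      intro α hα
      by_cases hαΘ : α ∈ Θ
      · exact hwpos α hαΘ
      · have hαpos : α ∈ pos := hRS.sim_subset hα
        have hαs : α ∉ Submodule.span ℝ (↑Θ : Set (𝔞 →ₗ[ℝ] ℝ)) :=
          fun hsp => hαΘ (sim_inter_span hRS hΘ hα hsp)
        obtain ⟨hp, hs⟩ := comp_weyl_out hRS hΘ hw α hαpos hαs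
        have hlt := (hmemS H).mp hH _ hp hs
        exact le_of_lt (by simpa using hlt)
    exact Set.mem_iUnion₂.mpr ⟨w', hw', ⟨w H, hwH, hw'eq⟩⟩
  have hUsubC : U ⊆ {H : 𝔞 | ∀ β ∈ pos \ rootsSpannedBy rts Θ, 0 ≤ β H} := by
    intro H hH
    obtain ⟨w, hw, hmem⟩ := Set.mem_iUnion₂.mp hH
    obtain ⟨x, hx, rfl⟩ := hmem
    intro β hβ
    have hβpos : β ∈ pos := hβ.1
    have hβs : β ∉ Submodule.span ℝ (↑Θ : Set (𝔞 →ₗ[ℝ] ℝ)) :=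
      fun hsp => hβ.2 ⟨hRS.pos_subset hβ.1, hsp⟩
    obtain ⟨hp, hs⟩ := comp_weyl_out hRS hΘ hw β hβpos hβs
    have hx' : ∀ α ∈ sim, 0 ≤ α x := by rw [hDchamber] at hx; exact hx
    have := pos_nonneg_on hRS hp hx'
    simpa using this
  have hfinal : S = interior U := by
    apply Set.Subset.antisymm
    · exact hopen.subset_interior_iff.mpr hSsubU
    · intro H hH β hβ
      obtain ⟨ε, hε, hball⟩ := Metric.isOpen_iff.mp isOpen_interior H hH
      have hβ0 : β ≠ 0 := fun h => hRS.ne_zero (h ▸ hRS.pos_subset hβ.1)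
      have hu : rieszVec β ≠ 0 := fun h => hβ0 (rieszVec_eq_zero_iff.mp h)
      have hun : 0 < ‖rieszVec β‖ := norm_pos_iff.mpr hu
      set t := ε / (2 * ‖rieszVec β‖) with ht
      have htpos : 0 < t := by positivity
      have hmem : H - t • rieszVec β ∈ Metric.ball H ε := by
        rw [Metric.mem_ball, dist_eq_norm]
        have : H - t • rieszVec β - H = -(t • rieszVec β) := by abel
        rw [this, norm_neg, norm_smul, Real.norm_eq_abs, abs_of_pos htpos, ht]
        have heq : ε / (2 * ‖rieszVec β‖) * ‖rieszVec β‖ = ε / 2 := by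
          field_simp
        rw [heq]
        linarith
      have h1 : 0 ≤ β (H - t • rieszVec β) :=
        hUsubC (interior_subset (hball hmem)) β hβ
      have h2 : β (H - t • rieszVec β) = β H - t * ‖rieszVec β‖^2 := by
        rw [map_sub, map_smul, smul_eq_mul, apply_rieszVec_self β]
      rw [h2] at h1
      nlinarith [mul_pos htpos (mul_pos hun hun)]
  exact ⟨hfinal, hopen, hconv, hcone⟩

end
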